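/- For every m ≥ 0: D_{pm} = m·Δ_{p−2} + D_m, and for every k with 0 < k < p: D_{pm+k} = m·Δ_{p−2} + (p−k)(k−1) + Δ_{k−2} + D_m + max{p−k−1, D_{m+1} − D_m}. -/

import Mathlib

open MeasureTheory
open scoped NNReal ENNReal

namespace Chacon

/-- The space of digit sequences with digits in `{0, …, p-1}`. -/
def Gamma (p : ℕ) : Set (ℕ → ℕ) := {x | ∀ i, x i < p}

/-- `Γ*`: sequences with digits `< p` having infinitely many coordinates `≠ p - 1`. -/
def GammaStar (p : ℕ) : Set (ℕ → ℕ) :=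
  {x | (∀ i, x i < p) ∧ {i | x i ≠ p - 1}.Infinite}

/-- The least index `i` with `x i ≠ p - 1`. -/
noncomputable def firstNot (p : ℕ) (x : ℕ → ℕ) : ℕ :=
  sInf {i | x i ≠ p - 1}

/-- `φ(x) = x_i` where `i` is the least index with `x_i ≠ p - 1`. -/
noncomputable def phi (p : ℕ) (x : ℕ → ℕ) : ℕ :=
  x (firstNot p x)

/-- The odometer `S` (addition of `1` with carry): the initial run of digits
`p - 1` is replaced by zeros, and the first digit `≠ p - 1` is increased by one. -/
noncomputable def odo (p : ℕ) (x : ℕ → ℕ) : ℕ → ℕ :=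
  fun i =>
    if i < firstNot p x then 0
    else if i = firstNot p x then x i + 1
    else x i

/-- `φ^(m)(x) = ∑_{j=0}^{m-1} φ(S^j x)`. -/
noncomputable def phiSum (p m : ℕ) (x : ℕ → ℕ) : ℕ :=
  ∑ j ∈ Finset.range m, phi p ((odo p)^[j] x)

/-- The base-`p` digit sequence of a real number `u`. -/
noncomputable def digitsOf (p : ℕ) (u : ℝ) : ℕ → ℕ :=
  fun i => (⌊u * (p : ℝ) ^ (i + 1)⌋).toNat % p

/-- `λ`: the product probability measure on digit sequences under which the
coordinates are i.i.d., uniformly distributed in `{0, …, p-1}`; it is realized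
concretely as the distribution of the base-`p` digit sequence of a uniformly
distributed random point of `[0,1)`. -/
noncomputable def lam (p : ℕ) : Measure (ℕ → ℕ) :=
  Measure.map (digitsOf p) (volume.restrict (Set.Ico (0 : ℝ) 1))

/-- `π_m(j) = λ({x : φ^(m)(x) = j})`. -/
noncomputable def pim (p m j : ℕ) : ℝ≥0∞ :=
  lam p {x | phiSum p m x = j}

/-- `P_m^p(t) = ∑_{j ≥ 0} π_m(j) t^j`, a real polynomial
(the sum is over `0 ≤ j ≤ m (p-2)` since `0 ≤ φ^(m) ≤ m (p-2)` a.s.). -/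
noncomputable def P (p m : ℕ) (t : ℝ) : ℝ :=
  ∑ j ∈ Finset.range (m * (p - 2) + 1), (pim p m j).toReal * t ^ j

/-- The `n`-th triangular number `Δ_n = n (n+1) / 2`. -/
def tri (n : ℕ) : ℕ := n * (n + 1) / 2

/-- The degree `D_m` of `P_m^p`: the largest `j` with `π_m(j) ≠ 0`. -/
noncomputable def D (p m : ℕ) : ℕ := sSup {j | pim p m j ≠ 0}

/-- The lower degree `d_m` of `P_m^p`: the least `j` with `π_m(j) ≠ 0`. -/
noncomputable def d (p m : ℕ) : ℕ := sInf {j | pim p m j ≠ 0}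





/-- digit `i` of `n` in base `p`. -/
def dig (p n i : ℕ) : ℕ := n / p ^ i % p

/-- lowest digit of `n` in base `p` that is not `p-1` (0 if `p ≤ 1`). -/
def f (p : ℕ) : ℕ → ℕ
  | n =>
    if h : 2 ≤ p ∧ n % p = p - 1 then f p (n / p) else n % p
  decreasing_by
    · have h1 : 1 ≤ n % p := by omega
      have h2 : n % p ≤ n := Nat.mod_le _ _
      exact Nat.div_lt_self (by omega) (by omega)

lemma f_eq (p n : ℕ) : f p n = if 2 ≤ p ∧ n % p = p - 1 then f p (n / p) else n % p := by
  rw [f]; rfl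

def G (p m v : ℕ) : ℕ := ∑ j ∈ Finset.range m, f p (v + j)

def S1 (a n : ℕ) : ℕ := ∑ j ∈ Finset.range n, (a + j)

lemma dig_lt {p : ℕ} (hp : 0 < p) (n i : ℕ) : dig p n i < p := Nat.mod_lt _ hp

lemma dig_succ (p n i : ℕ) : dig p n (i + 1) = dig p (n / p) i := by
  unfold dig
  rw [pow_succ, Nat.div_div_eq_div_mul, mul_comm]

lemma dig_zero (p n : ℕ) : dig p n 0 = n % p := by simp [dig]

lemma f_le {p : ℕ} (hp : 3 ≤ p) : ∀ n, f p n ≤ p - 2 := by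
  intro n
  induction n using Nat.strong_induction_on with
  | _ n ih =>
    rw [f_eq]
    split
    · rename_i h
      rcases Nat.eq_zero_or_pos n with rfl | hn
      · simp at h; omega
      · exact ih (n / p) (Nat.div_lt_self hn (by omega))
    · have := Nat.mod_lt n (show 0 < p by omega)
      omega

lemma f_eq_dig {p : ℕ} (hp : 2 ≤ p) :
    ∀ i0 t, (∀ i < i0, dig p t i = p - 1) → dig p t i0 ≠ p - 1 → f p t = dig p t i0 := by
  intro i0
  induction i0 with
  | zero =>
    intro t _ h0
    rw [dig_zero] at h0 ⊢
    rw [f_eq, if_neg (by tauto)]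
  | succ i0 ih =>
    intro t hlow hi0
    have h0 : t % p = p - 1 := by have := hlow 0 (by omega); rwa [dig_zero] at this
    rw [f_eq, if_pos ⟨hp, h0⟩, dig_succ]
    exact ih (t / p) (fun i hi => by rw [← dig_succ]; exact hlow (i + 1) (by omega))
      (by rwa [← dig_succ])

lemma carry {p : ℕ} (hp : 2 ≤ p) :
    ∀ i0 t, (∀ i < i0, dig p t i = p - 1) → dig p t i0 ≠ p - 1 →
      (∀ i < i0, dig p (t + 1) i = 0) ∧ dig p (t + 1) i0 = dig p t i0 + 1 ∧
        ∀ i, i0 < i → dig p (t + 1) i = dig p t i := by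
  intro i0
  induction i0 with
  | zero =>
    intro t _ h0
    have hplt := Nat.mod_lt t (show 0 < p by omega)
    rw [dig_zero] at h0
    have ht : t + 1 = p * (t / p) + (t % p + 1) := by
      have := Nat.div_add_mod t p; omega
    have hlt : t % p + 1 < p := by omega
    have hmod : (t + 1) % p = t % p + 1 := by
      rw [ht, Nat.mul_add_mod]; exact Nat.mod_eq_of_lt hlt
    have hdiv : (t + 1) / p = t / p := by
      have h2 : (t % p + 1) / p = 0 := Nat.div_eq_of_lt hlt
      rw [ht, Nat.mul_add_div (show 0 < p by omega), h2]
      omega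
    refine ⟨by omega, ?_, ?_⟩
    · rw [dig_zero, dig_zero, hmod]
    · intro i hi
      obtain ⟨i', rfl⟩ := Nat.exists_eq_add_of_lt hi
      simp only [Nat.zero_add, dig_succ, hdiv]
  | succ i0 ih =>
    intro t hlow hi0
    have h0 : t % p = p - 1 := by have := hlow 0 (by omega); rwa [dig_zero] at this
    have ht : t + 1 = p * (t / p + 1) := by
      have h1 : p * (t / p + 1) = p * (t / p) + p := by ring
      have h2 := Nat.div_add_mod t p
      omega
    have hmod : (t + 1) % p = 0 := by rw [ht, Nat.mul_mod_right]
    have hdiv : (t + 1) / p = t / p + 1 := by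
      rw [ht, Nat.mul_div_cancel_left _ (show 0 < p by omega)]
    obtain ⟨c1, c2, c3⟩ := ih (t / p)
      (fun i hi => by rw [← dig_succ]; exact hlow (i + 1) (by omega))
      (by rwa [← dig_succ])
    refine ⟨?_, ?_, ?_⟩
    · intro i hi
      cases i with
      | zero => rw [dig_zero, hmod]
      | succ i' => rw [dig_succ, hdiv]; exact c1 i' (by omega)
    · rw [dig_succ, hdiv, dig_succ]; exact c2
    · intro i hi
      obtain ⟨i', rfl⟩ := Nat.exists_eq_add_of_lt (show 0 < i by omega)
      rw [Nat.zero_add, dig_succ, hdiv, dig_succ]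
      exact c3 i' (by omega)



section sums
variable {p : ℕ}

lemma mod_div_add {u r j : ℕ} (hp : 0 < p) (hr : u % p = r) (hj : r + j < p) :
    (u + j) % p = r + j ∧ (u + j) / p = u / p := by
  have ht : u + j = p * (u / p) + (r + j) := by have := Nat.div_add_mod u p; omega
  constructor
  · rw [ht, Nat.mul_add_mod]; exact Nat.mod_eq_of_lt hj
  · have h2 : (r + j) / p = 0 := Nat.div_eq_of_lt hj
    rw [ht, Nat.mul_add_div hp, h2]
    omega

lemma mod_div_add' {u r j : ℕ} (hp : 0 < p) (hr : u % p = r) (hj1 : p ≤ r + j)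
    (hj2 : r + j < p + p) :
    (u + j) % p = r + j - p ∧ (u + j) / p = u / p + 1 := by
  have ht : u + j = p * (u / p + 1) + (r + j - p) := by
    have hd := Nat.div_add_mod u p
    rw [hr] at hd
    have h1 : p * (u / p + 1) = p * (u / p) + p := by ring
    omega
  constructor
  · rw [ht, Nat.mul_add_mod]; exact Nat.mod_eq_of_lt (by omega)
  · have h2 : (r + j - p) / p = 0 := Nat.div_eq_of_lt (by omega)
    rw [ht, Nat.mul_add_div hp, h2]

lemma f_add_of_lt (hp : 3 ≤ p) {u r j : ℕ} (hr : u % p = r) (hj : r + j ≤ p - 2) :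
    f p (u + j) = r + j := by
  obtain ⟨h1, _⟩ := mod_div_add (show 0 < p by omega) hr (show r + j < p by omega)
  rw [f_eq, h1, if_neg (by omega)]

lemma f_add_of_eq (hp : 3 ≤ p) {u r j : ℕ} (hr : u % p = r) (hj : r + j = p - 1) :
    f p (u + j) = f p (u / p) := by
  obtain ⟨h1, h2⟩ := mod_div_add (show 0 < p by omega) hr (show r + j < p by omega)
  rw [f_eq, h1, if_pos ⟨by omega, hj⟩, h2]

lemma f_add_of_ge (hp : 3 ≤ p) {u r j : ℕ} (hr : u % p = r) (hj1 : p ≤ r + j)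
    (hj2 : r + j ≤ p + p - 2) :
    f p (u + j) = r + j - p := by
  obtain ⟨h1, _⟩ := mod_div_add' (show 0 < p by omega) hr hj1 (by omega)
  rw [f_eq, h1, if_neg (by omega)]

lemma sum_f_low (hp : 3 ≤ p) {u k r : ℕ} (hr : u % p = r) (hk : r + k ≤ p - 1) :
    ∑ j ∈ Finset.range k, f p (u + j) = S1 r k := by
  refine Finset.sum_congr rfl fun j hj => ?_
  rw [Finset.mem_range] at hj
  exact f_add_of_lt hp hr (by omega)

lemma sum_f_high (hp : 3 ≤ p) {u k r : ℕ} (hr : u % p = r) (hk1 : p ≤ r + k) (hk2 : k ≤ p) :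
    ∑ j ∈ Finset.range k, f p (u + j)
      = S1 r (p - 1 - r) + f p (u / p) + S1 0 (r + k - p) := by
  have hrp : r < p := by rw [← hr]; exact Nat.mod_lt u (by omega)
  have hk : k = (p - 1 - r) + (1 + (r + k - p)) := by omega
  conv_lhs => rw [hk, Finset.sum_range_add, Finset.sum_range_add]
  have e1 : ∑ j ∈ Finset.range (p - 1 - r), f p (u + j) = S1 r (p - 1 - r) := by
    refine Finset.sum_congr rfl fun j hj => ?_
    rw [Finset.mem_range] at hj
    exact f_add_of_lt hp hr (by omega)
  have e2 : ∑ j ∈ Finset.range 1, f p (u + (p - 1 - r + j)) = f p (u / p) := by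
    rw [Finset.sum_range_one]
    exact f_add_of_eq hp hr (by omega)
  have e3 : ∑ j ∈ Finset.range (r + k - p), f p (u + (p - 1 - r + (1 + j)))
      = S1 0 (r + k - p) := by
    refine Finset.sum_congr rfl fun j hj => ?_
    rw [Finset.mem_range] at hj
    rw [f_add_of_ge hp hr (by omega) (by omega)]
    omega
  rw [e1, e2, e3]; omega

lemma S1_Ico (a n : ℕ) : S1 a n = ∑ i ∈ Finset.Ico a (a + n), i := by
  rw [Finset.sum_Ico_eq_sum_range]
  simp [S1]

lemma S1_tri (r : ℕ) (hr : r ≤ p - 1) (hp : 3 ≤ p) :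
    S1 r (p - 1 - r) + S1 0 r = tri (p - 2) := by
  rw [S1_Ico, S1_Ico, add_comm]
  have h1 : 0 + r = r := by omega
  have h2 : r + (p - 1 - r) = p - 1 := by omega
  rw [h1, h2, Finset.sum_Ico_consecutive _ (Nat.zero_le r) (by omega),
    ← Finset.range_eq_Ico, Finset.sum_range_id]
  unfold tri
  have h3 : p - 1 - 1 = p - 2 := by omega
  have h4 : p - 2 + 1 = p - 1 := by omega
  rw [h3, h4, Nat.mul_comm]

lemma sum_f_p (hp : 3 ≤ p) (u : ℕ) :
    ∑ j ∈ Finset.range p, f p (u + j) = tri (p - 2) + f p (u / p) := by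
  have hr : u % p = u % p := rfl
  have hrp : u % p < p := Nat.mod_lt u (by omega)
  rw [sum_f_high hp hr (by omega) (le_refl p)]
  have h1 : u % p + p - p = u % p := by omega
  rw [h1]
  have h2 := S1_tri (p := p) (u % p) (by omega) hp
  omega

end sums



noncomputable def M (p m : ℕ) : ℕ := sSup (Set.range (G p m))

section Mlemmas
variable {p : ℕ}

lemma G_le (hp : 3 ≤ p) (m v : ℕ) : G p m v ≤ m * (p - 2) := by
  unfold G
  calc ∑ j ∈ Finset.range m, f p (v + j) ≤ ∑ _j ∈ Finset.range m, (p - 2) :=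
        Finset.sum_le_sum fun j _ => f_le hp _
    _ = m * (p - 2) := by rw [Finset.sum_const, Finset.card_range, smul_eq_mul]

lemma bddAbove_G (hp : 3 ≤ p) (m : ℕ) : BddAbove (Set.range (G p m)) :=
  ⟨m * (p - 2), fun _ ⟨v, hv⟩ => hv ▸ G_le hp m v⟩

lemma G_le_M (hp : 3 ≤ p) (m v : ℕ) : G p m v ≤ M p m :=
  le_csSup (bddAbove_G hp m) ⟨v, rfl⟩

lemma exists_G_eq_M (hp : 3 ≤ p) (m : ℕ) : ∃ v, G p m v = M p m := by
  have h := Nat.sSup_mem (s := Set.range (G p m)) ⟨G p m 0, 0, rfl⟩ (bddAbove_G hp m)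
  exact h

lemma M_le (hp : 3 ≤ p) {m c : ℕ} (h : ∀ v, G p m v ≤ c) : M p m ≤ c :=
  csSup_le ⟨G p m 0, 0, rfl⟩ fun _ ⟨v, hv⟩ => hv ▸ h v

lemma G_succ (p m v : ℕ) : G p (m + 1) v = G p m v + f p (v + m) := by
  unfold G; rw [Finset.sum_range_succ]

lemma M_mono (hp : 3 ≤ p) (m : ℕ) : M p m ≤ M p (m + 1) := by
  refine M_le hp fun v => ?_
  calc G p m v ≤ G p (m + 1) v := by rw [G_succ]; omega
    _ ≤ M p (m + 1) := G_le_M hp _ v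

lemma G_pmul (hp : 3 ≤ p) (m v : ℕ) : G p (p * m) v = m * tri (p - 2) + G p m (v / p) := by
  induction m with
  | zero => simp [G]
  | succ m ih =>
    have h1 : p * (m + 1) = p * m + p := by ring
    unfold G at ih ⊢
    rw [h1, Finset.sum_range_add]
    have h2 : ∑ j ∈ Finset.range p, f p (v + (p * m + j))
        = tri (p - 2) + f p ((v + p * m) / p) := by
      have := sum_f_p hp (v + p * m)
      simpa [add_assoc] using this
    rw [ih, h2, Nat.add_mul_div_left _ _ (show 0 < p by omega)]
    rw [Finset.sum_range_succ]
    ring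

lemma M_pmul (hp : 3 ≤ p) (m : ℕ) : M p (p * m) = m * tri (p - 2) + M p m := by
  apply le_antisymm
  · refine M_le hp fun v => ?_
    rw [G_pmul hp]
    have := G_le_M hp m (v / p)
    omega
  · obtain ⟨w, hw⟩ := exists_G_eq_M hp m
    calc m * tri (p - 2) + M p m = G p (p * m) (p * w) := by
          rw [G_pmul hp, Nat.mul_div_cancel_left _ (show 0 < p by omega), hw]
      _ ≤ M p (p * m) := G_le_M hp _ _

end Mlemmas



section Mk
variable {p : ℕ}

lemma S1_mono {a b : ℕ} (n : ℕ) (h : a ≤ b) : S1 a n ≤ S1 b n :=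
  Finset.sum_le_sum fun j _ => by omega

lemma S1_split (a b c : ℕ) : S1 a (b + c) = S1 a b + S1 (a + b) c := by
  unfold S1
  rw [Finset.sum_range_add]
  congr 1
  exact Finset.sum_congr rfl fun j _ => by omega

lemma tri_succ (n : ℕ) : tri (n + 1) = tri n + (n + 1) := by
  unfold tri
  have h : (n + 1) * (n + 1 + 1) = n * (n + 1) + 2 * (n + 1) := by ring
  omega

lemma tri_pred {k : ℕ} (hk : 1 ≤ k) : tri (k - 1) = tri (k - 2) + (k - 1) := by
  rcases Nat.lt_or_ge k 2 with h | h
  · interval_cases k <;> simp [tri]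
  · obtain ⟨k', rfl⟩ : ∃ k', k = k' + 2 := ⟨k - 2, by omega⟩
    have h1 : k' + 2 - 1 = k' + 1 := by omega
    have h2 : k' + 2 - 2 = k' := by omega
    rw [h1, h2, tri_succ]

lemma S1_eq (a n : ℕ) : S1 a n = n * a + tri (n - 1) := by
  induction n with
  | zero => simp [S1, tri]
  | succ n ih =>
    rw [S1, Finset.sum_range_succ, ← S1, ih]
    have h1 : (n + 1) * a = n * a + a := by ring
    have h2 : tri (n + 1 - 1) = tri (n - 1) + n := by
      cases n with
      | zero => simp
      | succ n' => have := tri_succ n'; simp at *; omega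
    omega

lemma G_pmulk (hp : 3 ≤ p) (m k v : ℕ) :
    G p (p * m + k) v
      = m * tri (p - 2) + G p m (v / p) + ∑ j ∈ Finset.range k, f p (v + p * m + j) := by
  unfold G
  rw [Finset.sum_range_add]
  have h1 : ∑ j ∈ Finset.range (p * m), f p (v + j) = m * tri (p - 2) + G p m (v / p) :=
    G_pmul hp m v
  rw [h1]
  congr 1
  exact Finset.sum_congr rfl fun j _ => by rw [add_assoc]

lemma M_pmulk (hp : 3 ≤ p) (m k : ℕ) (hk0 : 0 < k) (hkp : k < p) :
    M p (p * m + k)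
      = m * tri (p - 2) + (p - k) * (k - 1) + tri (k - 2) + M p m
        + max (p - k - 1) (M p (m + 1) - M p m) := by
  set A := S1 (p - 1 - k) k + M p m with hA
  set B := S1 (p - k) (k - 1) + M p (m + 1) with hB
  have step1 : M p (p * m + k) = m * tri (p - 2) + max A B := by
    apply le_antisymm
    · refine M_le hp fun v => ?_
      rw [G_pmulk hp]
      have hrp : v % p < p := Nat.mod_lt v (by omega)
      have hu : (v + p * m) % p = v % p := Nat.add_mul_mod_self_left v p m
      have hud : (v + p * m) / p = v / p + m := Nat.add_mul_div_left v m (by omega)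
      rcases Nat.lt_or_ge (v % p + k) p with hcase | hcase
      · -- low case
        rw [sum_f_low hp hu (by omega)]
        have h1 : S1 (v % p) k ≤ S1 (p - 1 - k) k := S1_mono k (by omega)
        have h2 := G_le_M hp m (v / p)
        have h3 := le_max_left A B
        omega
      · -- high case
        rw [sum_f_high hp hu hcase (by omega), hud]
        have hG : G p m (v / p) + f p (v / p + m) = G p (m + 1) (v / p) := (G_succ p m _).symm
        have h2 := G_le_M hp (m + 1) (v / p)
        have hS : S1 (v % p) (p - 1 - v % p) + S1 0 (v % p + k - p) ≤ S1 (p - k) (k - 1) := by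
          have e : k - 1 = (v % p + k - p) + (p - 1 - v % p) := by omega
          have e2 : p - k + (v % p + k - p) = v % p := by omega
          have := S1_split (p - k) (v % p + k - p) (p - 1 - v % p)
          rw [e2] at this
          have hm := S1_mono (a := 0) (b := p - k) (v % p + k - p) (by omega)
          rw [e, this]
          omega
        have h3 := le_max_right A B
        omega
    · have hwA : m * tri (p - 2) + A ≤ M p (p * m + k) := by
        obtain ⟨w, hw⟩ := exists_G_eq_M hp m
        have hv : G p (p * m + k) (p * w + (p - 1 - k)) = m * tri (p - 2) + A := by
          rw [G_pmulk hp]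
          have hdv : (p * w + (p - 1 - k)) / p = w := by
            rw [Nat.mul_add_div (by omega), Nat.div_eq_of_lt (by omega)]
            omega
          have hmv : (p * w + (p - 1 - k) + p * m) % p = p - 1 - k := by
            rw [Nat.add_mul_mod_self_left, Nat.mul_add_mod]
            exact Nat.mod_eq_of_lt (by omega)
          rw [sum_f_low hp hmv (by omega), hdv, hw, hA]
          omega
        rw [← hv]
        exact G_le_M hp _ _
      have hwB : m * tri (p - 2) + B ≤ M p (p * m + k) := by
        obtain ⟨w, hw⟩ := exists_G_eq_M hp (m + 1)
        have hv : G p (p * m + k) (p * w + (p - k)) = m * tri (p - 2) + B := by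
          rw [G_pmulk hp]
          have hdv : (p * w + (p - k)) / p = w := by
            rw [Nat.mul_add_div (by omega), Nat.div_eq_of_lt (by omega)]
            omega
          have hmv : (p * w + (p - k) + p * m) % p = p - k := by
            rw [Nat.add_mul_mod_self_left, Nat.mul_add_mod]
            exact Nat.mod_eq_of_lt (by omega)
          have hmd : (p * w + (p - k) + p * m) / p = w + m := by
            rw [Nat.add_mul_div_left _ _ (show 0 < p by omega), hdv]
          rw [sum_f_high hp hmv (by omega) (by omega), hmd, hdv]
          have e1 : p - 1 - (p - k) = k - 1 := by omega
          have e2 : p - k + k - p = 0 := by omega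
          have e3 : S1 0 0 = 0 := by simp [S1]
          rw [e1, e2, e3, hB]
          have hG : G p m w + f p (w + m) = G p (m + 1) w := (G_succ p m w).symm
          omega
        rw [← hv]
        exact G_le_M hp _ _
      omega
  -- step 2 : closed form of max A B
  have hSA : S1 (p - 1 - k) k = k * (p - 1 - k) + tri (k - 1) := S1_eq _ _
  have hSB : S1 (p - k) (k - 1) = (k - 1) * (p - k) + tri (k - 2) := by
    have e : k - 1 - 1 = k - 2 := by omega
    rw [S1_eq, e]
  have hid : k * (p - 1 - k) + tri (k - 1) = (p - k) * (k - 1) + tri (k - 2) + (p - k - 1) := by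
    have htp := tri_pred (show 1 ≤ k by omega)
    obtain ⟨a, ha⟩ : ∃ a, p - k = a + 1 := ⟨p - k - 1, by omega⟩
    obtain ⟨k', hk'⟩ : ∃ k', k = k' + 1 := ⟨k - 1, by omega⟩
    have e1 : p - 1 - k = a := by omega
    have e2 : k - 1 = k' := by omega
    have e3 : p - k - 1 = a := by omega
    rw [e1, e3, ha, htp, e2]
    have h4 : k * a + k' = (a + 1) * k' + a := by rw [hk']; ring
    omega
  have hM := M_mono hp m
  have hcomm : (k - 1) * (p - k) = (p - k) * (k - 1) := Nat.mul_comm _ _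
  rw [step1, hA, hB, hSA, hSB]
  omega

end Mk


section Dyn
variable {p : ℕ}

lemma dyn_step (hp : 3 ≤ p) {N t : ℕ} (htop : dig p t N ≤ p - 2)
    (y : ℕ → ℕ) (hy : ∀ i ≤ N, y i = dig p t i) :
    phi p y = f p t ∧ ∀ i ≤ N, odo p y i = dig p (t + 1) i := by
  set i0 := sInf {i | dig p t i ≠ p - 1} with hi0def
  have hNmem : N ∈ {i | dig p t i ≠ p - 1} := by
    simp only [Set.mem_setOf_eq]; omega
  have hi0mem : dig p t i0 ≠ p - 1 := Nat.sInf_mem ⟨N, hNmem⟩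
  have hi0le : i0 ≤ N := Nat.sInf_le hNmem
  have hlow : ∀ i < i0, dig p t i = p - 1 := by
    intro i hi
    by_contra hne
    have hmem' : i ∈ {i | dig p t i ≠ p - 1} := hne
    have := Nat.sInf_le hmem'
    omega
  have hfn : firstNot p y = i0 := by
    unfold firstNot
    have hmem : i0 ∈ {i | y i ≠ p - 1} := by
      simp only [Set.mem_setOf_eq, hy i0 hi0le]; exact hi0mem
    apply le_antisymm (Nat.sInf_le hmem)
    have hk := Nat.sInf_mem (⟨i0, hmem⟩ : {i | y i ≠ p - 1}.Nonempty)
    set k := sInf {i | y i ≠ p - 1}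
    by_contra hlt
    push_neg at hlt
    have hkN : k ≤ N := by omega
    rw [Set.mem_setOf_eq, hy k hkN] at hk
    exact hk (hlow k (by omega))
  obtain ⟨c1, c2, c3⟩ := carry (show 2 ≤ p by omega) i0 t hlow hi0mem
  constructor
  · rw [phi, hfn, hy i0 hi0le]
    exact (f_eq_dig (show 2 ≤ p by omega) i0 t hlow hi0mem).symm
  · intro i hi
    unfold odo
    rw [hfn]
    rcases Nat.lt_trichotomy i i0 with h | h | h
    · rw [if_pos h, c1 i h]
    · rw [if_neg (by omega), if_pos h, hy i hi, h, c2]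
    · rw [if_neg (by omega), if_neg (by omega), hy i hi, c3 i h]

lemma lt_pow_of_digN {n N : ℕ} (hp : 3 ≤ p) (h : n / p ^ N ≤ p - 2) : n < p ^ (N + 1) := by
  have hpN : 0 < p ^ N := Nat.pow_pos (by omega)
  have hdm := Nat.div_add_mod n (p ^ N)
  have hmod := Nat.mod_lt n hpN
  have hle : p ^ N * (n / p ^ N) ≤ p ^ N * (p - 2) := Nat.mul_le_mul_left _ h
  have hps : p ^ (N + 1) = p ^ N * p := by rw [pow_succ]
  have h3 : p ^ N * (p - 2) + 2 * p ^ N ≤ p ^ N * p := by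
    have h5 : p ^ N * (p - 2) + p ^ N * 2 = p ^ N * (p - 2 + 2) := by ring
    have h4 : p - 2 + 2 = p := by omega
    rw [h4] at h5
    omega
  omega

lemma dyn_bound (hp : 3 ≤ p) {N n mm : ℕ} (hm : mm ≤ p ^ N) (hn : n < p ^ (N + 1))
    (hdig : dig p n N ≤ p - 3) {j : ℕ} (hj : j ≤ mm) :
    dig p (n + j) N ≤ p - 2 ∧ n + j < p ^ (N + 1) := by
  have hpN : 0 < p ^ N := Nat.pow_pos (by omega)
  have hnd : n / p ^ N < p := by
    rw [Nat.div_lt_iff_lt_mul hpN]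
    calc n < p ^ (N + 1) := hn
      _ = p * p ^ N := by rw [pow_succ]; ring
  have hdn : dig p n N = n / p ^ N := Nat.mod_eq_of_lt hnd
  have h1 : (n + j) / p ^ N ≤ n / p ^ N + 1 := by
    calc (n + j) / p ^ N ≤ (n + p ^ N) / p ^ N := Nat.div_le_div_right (by omega)
      _ = n / p ^ N + 1 := Nat.add_div_right _ hpN
  have hdiv : (n + j) / p ^ N ≤ p - 2 := by omega
  have hlt : n + j < p ^ (N + 1) := lt_pow_of_digN hp hdiv
  have hd2 : dig p (n + j) N = (n + j) / p ^ N := Nat.mod_eq_of_lt (by omega)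
  rw [hd2]
  exact ⟨hdiv, hlt⟩

lemma dyn (hp : 3 ≤ p) {N mm n : ℕ} (hm : mm ≤ p ^ N) (hn : n < p ^ (N + 1))
    (hdig : dig p n N ≤ p - 3) (x : ℕ → ℕ) (hx : ∀ i ≤ N, x i = dig p n i) :
    phiSum p mm x = G p mm n := by
  have key : ∀ j, j ≤ mm → ∀ i ≤ N, (odo p)^[j] x i = dig p (n + j) i := by
    intro j
    induction j with
    | zero => intro _ i hi; simpa using hx i hi
    | succ j ih =>
      intro hjm i hi
      obtain ⟨hdb, _⟩ := dyn_bound hp hm hn hdig (show j ≤ mm by omega)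
      obtain ⟨_, hodo⟩ := dyn_step hp hdb ((odo p)^[j] x) (ih (by omega))
      rw [Function.iterate_succ_apply', hodo i hi, ← add_assoc]
  unfold phiSum G
  refine Finset.sum_congr rfl fun j hj => ?_
  rw [Finset.mem_range] at hj
  obtain ⟨hdb, _⟩ := dyn_bound hp hm hn hdig (show j ≤ mm by omega)
  obtain ⟨hphi, _⟩ := dyn_step hp hdb ((odo p)^[j] x) (key j (by omega))
  exact hphi

end Dyn
section MeasPart
open Set
variable {p : ℕ}

def ofD (p L : ℕ) (b : ℕ → ℕ) : ℕ := ∑ i ∈ Finset.range L, b i * p ^ i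

lemma ofD_succ (L : ℕ) (b : ℕ → ℕ) :
    ofD p (L + 1) b = b 0 + p * ofD p L (fun i => b (i + 1)) := by
  unfold ofD
  rw [Finset.sum_range_succ' (fun i => b i * p ^ i), Finset.mul_sum]
  rw [add_comm]
  congr 1
  · simp
  · refine Finset.sum_congr rfl fun i _ => ?_
    rw [pow_succ]
    ring

lemma ofD_lt (hp : 1 ≤ p) {L : ℕ} {b : ℕ → ℕ} (hb : ∀ i < L, b i < p) :
    ofD p L b < p ^ L := by
  induction L generalizing b with
  | zero => simp [ofD]
  | succ L ih =>
    rw [ofD_succ]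
    have h1 : ofD p L (fun i => b (i + 1)) < p ^ L := ih fun i hi => hb (i + 1) (by omega)
    have h2 : b 0 < p := hb 0 (by omega)
    have h3 : p * (ofD p L (fun i => b (i + 1)) + 1) ≤ p * p ^ L :=
      Nat.mul_le_mul_left _ (by omega)
    have h4 : p ^ (L + 1) = p * p ^ L := by rw [pow_succ]; ring
    have h5 : p * (ofD p L (fun i => b (i + 1)) + 1)
        = p * ofD p L (fun i => b (i + 1)) + p := by ring
    omega

lemma dig_ofD (hp : 1 ≤ p) {L : ℕ} {b : ℕ → ℕ} (hb : ∀ i < L, b i < p) :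
    ∀ i < L, dig p (ofD p L b) i = b i := by
  induction L generalizing b with
  | zero => intro i hi; omega
  | succ L ih =>
    intro i hi
    have hmd : ofD p (L + 1) b % p = b 0 ∧ ofD p (L + 1) b / p = ofD p L (fun i => b (i + 1)) := by
      rw [ofD_succ]
      constructor
      · rw [add_comm, Nat.mul_add_mod]
        exact Nat.mod_eq_of_lt (hb 0 (by omega))
      · rw [add_comm, Nat.mul_add_div (by omega), Nat.div_eq_of_lt (hb 0 (by omega))]
        omega
    cases i with
    | zero => rw [dig_zero]; exact hmd.1
    | succ i => rw [dig_succ, hmd.2]; exact ih (fun i hi => hb (i + 1) (by omega)) i (by omega)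

lemma measurable_digitsOf (p : ℕ) : Measurable (digitsOf p) := by
  refine measurable_pi_lambda _ fun i => ?_
  exact (measurable_of_countable fun z : ℤ => z.toNat % p).comp
    (Int.measurable_floor.comp (measurable_id.mul_const _))

lemma digitsOf_natFloor (p : ℕ) (u : ℝ) (i : ℕ) :
    digitsOf p u i = ⌊u * (p : ℝ) ^ (i + 1)⌋₊ % p := by
  unfold digitsOf
  rw [Int.floor_toNat]

lemma digitsOf_lt (hp : 1 ≤ p) (u : ℝ) (i : ℕ) : digitsOf p u i < p :=
  Nat.mod_lt _ (by omega)

lemma digit_window (hp : 1 ≤ p) {u : ℝ} (hu : 0 ≤ u) {L i : ℕ} (hi : i < L) :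
    digitsOf p u i = dig p ⌊u * (p : ℝ) ^ L⌋₊ (L - 1 - i) := by
  have hq : (0 : ℝ) < (p : ℝ) ^ (L - 1 - i) := by positivity
  have hsplit : (p : ℝ) ^ L = (p : ℝ) ^ (i + 1) * (p : ℝ) ^ (L - 1 - i) := by
    rw [← pow_add]
    congr 1
    omega
  have hdiv : u * (p : ℝ) ^ (i + 1) = u * (p : ℝ) ^ L / ((p ^ (L - 1 - i) : ℕ) : ℝ) := by
    push_cast
    rw [hsplit]
    field_simp
  rw [digitsOf_natFloor, hdiv, Nat.floor_div_natCast]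
  rfl

lemma lam_apply {S : Set (ℕ → ℕ)} (hS : MeasurableSet S) :
    lam p S = volume (digitsOf p ⁻¹' S ∩ Ico (0 : ℝ) 1) := by
  rw [lam, Measure.map_apply (measurable_digitsOf p) hS,
    Measure.restrict_apply (hS.preimage (measurable_digitsOf p))]

lemma meas_cyl (L : ℕ) (a : ℕ → ℕ) : MeasurableSet {x : ℕ → ℕ | ∀ i < L, x i = a i} := by
  have : {x : ℕ → ℕ | ∀ i < L, x i = a i}
      = ⋂ (i : ℕ) (_ : i < L), (fun x : ℕ → ℕ => x i) ⁻¹' {a i} := by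
    ext x; simp [Set.mem_iInter]
  rw [this]
  exact MeasurableSet.iInter fun i => MeasurableSet.iInter fun _ =>
    (measurable_pi_apply i) (measurableSet_singleton _)

lemma lam_cyl_pos (hp : 3 ≤ p) (L : ℕ) {a : ℕ → ℕ} (ha : ∀ i < L, a i < p) :
    lam p {x | ∀ i < L, x i = a i} ≠ 0 := by
  have hp1 : 1 ≤ p := by omega
  set c := ofD p L (fun i' => a (L - 1 - i')) with hc
  have hclt : c < p ^ L := ofD_lt hp1 fun i hi => ha _ (by omega)
  have hq : (0 : ℝ) < (p : ℝ) ^ L := by positivity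
  have hsub : Ico ((c : ℝ) / (p : ℝ) ^ L) (((c : ℝ) + 1) / (p : ℝ) ^ L)
      ⊆ digitsOf p ⁻¹' {x | ∀ i < L, x i = a i} ∩ Ico (0 : ℝ) 1 := by
    rintro u ⟨hu1, hu2⟩
    have hu0 : 0 ≤ u := le_trans (by positivity) hu1
    have hu1' : (c : ℝ) ≤ u * (p : ℝ) ^ L := by
      rw [div_le_iff₀ hq] at hu1
      linarith
    have hu2' : u * (p : ℝ) ^ L < (c : ℝ) + 1 := by
      rw [lt_div_iff₀ hq] at hu2
      linarith
    have hlt1 : u < 1 := by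
      have hcp : ((c : ℝ) + 1) ≤ (p : ℝ) ^ L := by
        have : ((c + 1 : ℕ) : ℝ) ≤ ((p ^ L : ℕ) : ℝ) := Nat.cast_le.mpr (by omega)
        push_cast at this
        linarith
      exact lt_of_lt_of_le hu2 ((div_le_one hq).mpr hcp)
    have hfl : ⌊u * (p : ℝ) ^ L⌋₊ = c := by
      rw [Nat.floor_eq_iff (by positivity)]
      exact ⟨hu1', by push_cast; linarith⟩
    constructor
    · intro i hi
      show digitsOf p u i = a i
      rw [digit_window hp1 hu0 hi, hfl, hc]
      rw [dig_ofD hp1 (fun i' hi' => ha _ (by omega)) (L - 1 - i) (by omega)]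
      congr 1
      omega
    · exact ⟨hu0, hlt1⟩
  have hvol : volume (Ico ((c : ℝ) / (p : ℝ) ^ L) (((c : ℝ) + 1) / (p : ℝ) ^ L))
      = ENNReal.ofReal (1 / (p : ℝ) ^ L) := by
    rw [Real.volume_Ico]
    congr 1
    field_simp
    ring
  have hle : ENNReal.ofReal (1 / (p : ℝ) ^ L) ≤ lam p {x | ∀ i < L, x i = a i} := by
    rw [lam_apply (meas_cyl L a), ← hvol]
    exact measure_mono hsub
  have hpos : 0 < ENNReal.ofReal (1 / (p : ℝ) ^ L) := by
    rw [ENNReal.ofReal_pos]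
    positivity
  intro h0
  rw [h0] at hle
  exact absurd hle (by simpa using hpos)

lemma card_digits_ge (hp : 3 ≤ p) (K : ℕ) : ∀ L : ℕ,
    ((Finset.range (p ^ (K + L))).filter fun c => ∀ i < L, p - 2 ≤ dig p c i).card
      ≤ p ^ K * 2 ^ L := by
  intro L
  induction L with
  | zero =>
    rw [Finset.filter_true_of_mem (fun c _ => by omega)]
    simp
  | succ L ih =>
    have hmapsto : ∀ c ∈ (Finset.range (p ^ (K + (L + 1)))).filter
        (fun c => ∀ i < L + 1, p - 2 ≤ dig p c i),
        (c / p, c % p) ∈ ((Finset.range (p ^ (K + L))).filter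
          (fun c => ∀ i < L, p - 2 ≤ dig p c i)) ×ˢ ({p - 2, p - 1} : Finset ℕ) := by
      intro c hc
      rw [Finset.mem_filter, Finset.mem_range] at hc
      obtain ⟨hclt, hcd⟩ := hc
      rw [Finset.mem_product, Finset.mem_filter, Finset.mem_range]
      refine ⟨⟨?_, ?_⟩, ?_⟩
      · rw [Nat.div_lt_iff_lt_mul (show 0 < p by omega)]
        calc c < p ^ (K + (L + 1)) := hclt
          _ = p ^ (K + L) * p := by rw [show K + (L + 1) = (K + L) + 1 by omega, pow_succ]
      · intro i hi
        rw [← dig_succ]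
        exact hcd (i + 1) (by omega)
      · have h0 := hcd 0 (by omega)
        rw [dig_zero] at h0
        have := Nat.mod_lt c (show 0 < p by omega)
        simp only [Finset.mem_insert, Finset.mem_singleton]
        omega
    have hinj : Set.InjOn (fun c => (c / p, c % p))
        ((Finset.range (p ^ (K + (L + 1)))).filter fun c => ∀ i < L + 1, p - 2 ≤ dig p c i) := by
      intro c _ c' _ h
      simp only [Prod.mk.injEq] at h
      obtain ⟨hd, hm⟩ := h
      have h1 := Nat.div_add_mod c p
      have h2 := Nat.div_add_mod c' p
      rw [hd, hm] at h1
      omega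
    calc ((Finset.range (p ^ (K + (L + 1)))).filter
          fun c => ∀ i < L + 1, p - 2 ≤ dig p c i).card
        ≤ (((Finset.range (p ^ (K + L))).filter
          (fun c => ∀ i < L, p - 2 ≤ dig p c i)) ×ˢ ({p - 2, p - 1} : Finset ℕ)).card :=
          Finset.card_le_card_of_injOn _ hmapsto hinj
      _ = ((Finset.range (p ^ (K + L))).filter
          (fun c => ∀ i < L, p - 2 ≤ dig p c i)).card * ({p - 2, p - 1} : Finset ℕ).card :=
          Finset.card_product _ _
      _ ≤ p ^ K * 2 ^ L * 2 := by
        have h2 : ({p - 2, p - 1} : Finset ℕ).card ≤ 2 :=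
          le_trans (Finset.card_insert_le _ _) (by simp)
        exact Nat.mul_le_mul ih h2
      _ = p ^ K * 2 ^ (L + 1) := by rw [pow_succ]; ring

lemma meas_tail (K L : ℕ) (q : ℕ) :
    MeasurableSet {x : ℕ → ℕ | ∀ N, K ≤ N → N < K + L → q ≤ x N} := by
  have : {x : ℕ → ℕ | ∀ N, K ≤ N → N < K + L → q ≤ x N}
      = ⋂ (N : ℕ) (_ : K ≤ N ∧ N < K + L), (fun x : ℕ → ℕ => x N) ⁻¹' Ici q := by
    ext x
    simp only [Set.mem_setOf_eq, Set.mem_iInter, Set.mem_preimage, Set.mem_Ici]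
    constructor
    · intro h N hN; exact h N hN.1 hN.2
    · intro h N h1 h2; exact h N ⟨h1, h2⟩
  rw [this]
  exact MeasurableSet.iInter fun N => MeasurableSet.iInter fun _ =>
    (measurable_pi_apply N) measurableSet_Ici

lemma lam_tail_le (hp : 3 ≤ p) (K L : ℕ) :
    lam p {x | ∀ N, K ≤ N → N < K + L → p - 2 ≤ x N}
      ≤ ((p ^ K * 2 ^ L : ℕ) : ℝ≥0∞) * ENNReal.ofReal (1 / (p : ℝ) ^ (K + L)) := by
  have hp1 : 1 ≤ p := by omega
  set F := (Finset.range (p ^ (K + L))).filter (fun c => ∀ i < L, p - 2 ≤ dig p c i) with hF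
  have hq : (0 : ℝ) < (p : ℝ) ^ (K + L) := by positivity
  have hsub : digitsOf p ⁻¹' {x | ∀ N, K ≤ N → N < K + L → p - 2 ≤ x N} ∩ Ico (0 : ℝ) 1
      ⊆ ⋃ c ∈ F, Ico ((c : ℝ) / (p : ℝ) ^ (K + L)) (((c : ℝ) + 1) / (p : ℝ) ^ (K + L)) := by
    rintro u ⟨hu1, hu2⟩
    have hu0 : (0 : ℝ) ≤ u := hu2.1
    set c := ⌊u * (p : ℝ) ^ (K + L)⌋₊ with hcdef
    have hclt : c < p ^ (K + L) := by
      rw [hcdef, Nat.floor_lt (by positivity)]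
      calc u * (p : ℝ) ^ (K + L) < 1 * (p : ℝ) ^ (K + L) := by
            apply mul_lt_mul_of_pos_right hu2.2 hq
        _ = ((p ^ (K + L) : ℕ) : ℝ) := by push_cast; ring
    have hcF : c ∈ F := by
      rw [hF, Finset.mem_filter, Finset.mem_range]
      refine ⟨hclt, fun i hi => ?_⟩
      have hN := hu1 (K + L - 1 - i) (by omega) (by omega)
      rw [digit_window hp1 hu0 (show K + L - 1 - i < K + L by omega)] at hN
      have he : K + L - 1 - (K + L - 1 - i) = i := by omega
      rwa [he] at hN
    rw [Set.mem_iUnion]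
    refine ⟨c, Set.mem_iUnion.mpr ⟨hcF, ?_⟩⟩
    constructor
    · rw [div_le_iff₀ hq]
      exact Nat.floor_le (by positivity)
    · rw [lt_div_iff₀ hq]
      exact Nat.lt_floor_add_one _
  calc lam p {x | ∀ N, K ≤ N → N < K + L → p - 2 ≤ x N}
      = volume (digitsOf p ⁻¹' {x | ∀ N, K ≤ N → N < K + L → p - 2 ≤ x N} ∩ Ico (0 : ℝ) 1) :=
        lam_apply (meas_tail K L (p - 2))
    _ ≤ volume (⋃ c ∈ F, Ico ((c : ℝ) / (p : ℝ) ^ (K + L)) (((c : ℝ) + 1) / (p : ℝ) ^ (K + L))) :=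
        measure_mono hsub
    _ ≤ ∑ c ∈ F, volume (Ico ((c : ℝ) / (p : ℝ) ^ (K + L)) (((c : ℝ) + 1) / (p : ℝ) ^ (K + L))) :=
        measure_biUnion_finset_le F _
    _ = ∑ _c ∈ F, ENNReal.ofReal (1 / (p : ℝ) ^ (K + L)) := by
        refine Finset.sum_congr rfl fun c _ => ?_
        rw [Real.volume_Ico]
        congr 1
        field_simp
        ring
    _ = (F.card : ℝ≥0∞) * ENNReal.ofReal (1 / (p : ℝ) ^ (K + L)) := by
        rw [Finset.sum_const, nsmul_eq_mul]
    _ ≤ ((p ^ K * 2 ^ L : ℕ) : ℝ≥0∞) * ENNReal.ofReal (1 / (p : ℝ) ^ (K + L)) := by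
        apply mul_le_mul_left
        exact_mod_cast Nat.cast_le.mpr (card_digits_ge hp K L)

lemma lam_tail_zero (hp : 3 ≤ p) (K : ℕ) :
    lam p {x | ∀ N, K ≤ N → p - 2 ≤ x N} = 0 := by
  have hple : (0 : ℝ) < p := by positivity
  have hb : ∀ L : ℕ, ((p ^ K * 2 ^ L : ℕ) : ℝ≥0∞) * ENNReal.ofReal (1 / (p : ℝ) ^ (K + L))
      = ENNReal.ofReal ((p : ℝ) ^ K * (2 / (p : ℝ)) ^ L / (p : ℝ) ^ K) := by
    intro L
    rw [← ENNReal.ofReal_natCast, ← ENNReal.ofReal_mul (by positivity)]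
    congr 1
    push_cast
    rw [pow_add]
    field_simp
    rw [← mul_pow]
    congr 1
    field_simp
  have hmono : ∀ L : ℕ, lam p {x | ∀ N, K ≤ N → p - 2 ≤ x N}
      ≤ ENNReal.ofReal ((p : ℝ) ^ K * (2 / (p : ℝ)) ^ L / (p : ℝ) ^ K) := by
    intro L
    rw [← hb]
    refine le_trans (measure_mono fun x hx => ?_) (lam_tail_le hp K L)
    intro N h1 _
    exact hx N h1
  have h2p : (2 : ℝ) / p < 1 := by
    rw [div_lt_one hple]
    have : (3 : ℝ) ≤ (p : ℝ) := by exact_mod_cast hp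
    linarith
  have htend : Filter.Tendsto (fun L : ℕ => ENNReal.ofReal ((p : ℝ) ^ K * (2 / (p : ℝ)) ^ L / (p : ℝ) ^ K))
      Filter.atTop (nhds 0) := by
    have h0 : Filter.Tendsto (fun L : ℕ => (p : ℝ) ^ K * (2 / (p : ℝ)) ^ L / (p : ℝ) ^ K)
        Filter.atTop (nhds 0) := by
      have h1 := tendsto_pow_atTop_nhds_zero_of_lt_one (by positivity : (0:ℝ) ≤ 2 / p) h2p
      have := (h1.const_mul ((p : ℝ) ^ K)).div_const ((p : ℝ) ^ K)
      simpa using this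
    have := ENNReal.tendsto_ofReal h0
    simpa using this
  have := le_of_tendsto_of_tendsto' tendsto_const_nhds htend hmono
  simpa using this

lemma good_phiSum (hp : 3 ≤ p) (m : ℕ) {x : ℕ → ℕ} (hlt : ∀ i, x i < p)
    {N : ℕ} (hN : m ≤ p ^ N) (hN3 : x N ≤ p - 3) :
    phiSum p m x = G p m (ofD p (N + 1) x) := by
  have hp1 : 1 ≤ p := by omega
  have hb : ∀ i < N + 1, x i < p := fun i _ => hlt i
  have hn : ofD p (N + 1) x < p ^ (N + 1) := ofD_lt hp1 hb
  have hdig : ∀ i ≤ N, dig p (ofD p (N + 1) x) i = x i :=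
    fun i hi => dig_ofD hp1 hb i (by omega)
  exact dyn hp hN hn (by rw [hdig N le_rfl]; exact hN3) x fun i hi => (hdig i hi).symm

lemma le_pow_self' (hp : 3 ≤ p) {a N : ℕ} (h : a ≤ N) : a ≤ p ^ N := by
  have h1 : N < 2 ^ N := Nat.lt_two_pow_self
  have h2 : 2 ^ N ≤ p ^ N := Nat.pow_le_pow_left (by omega) N
  omega

lemma lam_notlt_zero (hp : 3 ≤ p) (i : ℕ) : lam p {x : ℕ → ℕ | ¬ x i < p} = 0 := by
  have hmeas : MeasurableSet {x : ℕ → ℕ | ¬ x i < p} := by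
    have : {x : ℕ → ℕ | ¬ x i < p} = (fun x : ℕ → ℕ => x i) ⁻¹' Ici p := by
      ext x; simp [not_lt]
    rw [this]
    exact (measurable_pi_apply i) measurableSet_Ici
  rw [lam_apply hmeas]
  have he : digitsOf p ⁻¹' {x : ℕ → ℕ | ¬ x i < p} ∩ Ico (0 : ℝ) 1 = ∅ := by
    ext u
    simp only [Set.mem_inter_iff, Set.mem_preimage, Set.mem_setOf_eq, Set.mem_empty_iff_false,
      iff_false, not_and]
    intro h _
    exact h (digitsOf_lt (by omega) u i)
  rw [he, measure_empty]

lemma support_pim (hp : 3 ≤ p) (m : ℕ) : {j | pim p m j ≠ 0} = Set.range (G p m) := by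
  have hp1 : 1 ≤ p := by omega
  ext j
  simp only [Set.mem_setOf_eq, Set.mem_range]
  constructor
  · intro hne
    by_contra hnr
    push_neg at hnr
    apply hne
    have hsub : {x | phiSum p m x = j}
        ⊆ (⋃ i, {x : ℕ → ℕ | ¬ x i < p}) ∪ {x | ∀ N, m ≤ N → p - 2 ≤ x N} := by
      intro x hx
      by_cases hlt : ∀ i, x i < p
      · right
        intro N hmN
        by_contra hcon
        have hN3 : x N ≤ p - 3 := by
          have := hlt N
          omega
        have := good_phiSum hp m hlt (le_pow_self' hp hmN) hN3
        rw [hx] at this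
        exact hnr _ this.symm
      · left
        push_neg at hlt
        obtain ⟨i, hi⟩ := hlt
        exact Set.mem_iUnion.mpr ⟨i, by simp only [Set.mem_setOf_eq]; omega⟩
    have hU : lam p (⋃ i, {x : ℕ → ℕ | ¬ x i < p}) = 0 := by
      apply le_antisymm _ (zero_le)
      refine le_trans (measure_iUnion_le _) ?_
      have he : ∀ i : ℕ, lam p {x : ℕ → ℕ | p ≤ x i} = 0 := by
        intro i
        have : {x : ℕ → ℕ | p ≤ x i} = {x : ℕ → ℕ | ¬ x i < p} := by
          ext x; simp [not_lt]
        rw [this]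
        exact lam_notlt_zero hp i
      simp only [not_lt]
      simp [he]
    have h0 : lam p ((⋃ i, {x : ℕ → ℕ | ¬ x i < p}) ∪ {x | ∀ N, m ≤ N → p - 2 ≤ x N}) = 0 := by
      apply le_antisymm _ (zero_le)
      refine le_trans (measure_union_le _ _) ?_
      rw [hU, lam_tail_zero hp m, add_zero]
    exact le_antisymm (le_trans (measure_mono hsub) (le_of_eq h0)) (zero_le)
  · rintro ⟨v, rfl⟩
    set N := m + v with hNdef
    have hmN : m ≤ p ^ N := le_pow_self' hp (by omega)
    have hvN : v < p ^ N := by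
      have h1 : N < 2 ^ N := Nat.lt_two_pow_self
      have h2 : 2 ^ N ≤ p ^ N := Nat.pow_le_pow_left (by omega) N
      omega
    have hvN1 : v < p ^ (N + 1) := lt_of_lt_of_le hvN (Nat.pow_le_pow_right (by omega) (by omega))
    have hdigN : dig p v N = 0 := by
      unfold dig
      rw [Nat.div_eq_of_lt hvN, Nat.zero_mod]
    have hsub : {x | ∀ i < N + 1, x i = dig p v i} ⊆ {x | phiSum p m x = G p m v} := by
      intro x hx
      exact dyn hp hmN hvN1 (by omega) x fun i hi => hx i (by omega)
    have hpos := lam_cyl_pos hp (N + 1) (a := fun i => dig p v i)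
      (fun i _ => dig_lt (by omega) v i)
    intro hzero
    apply hpos
    apply le_antisymm _ (zero_le)
    calc lam p {x | ∀ i < N + 1, x i = dig p v i} ≤ lam p {x | phiSum p m x = G p m v} :=
          measure_mono hsub
      _ = 0 := hzero

theorem D_eq_M (hp : 3 ≤ p) (m : ℕ) : D p m = M p m := by
  unfold D M
  rw [support_pim hp m]

end MeasPart

/-- `D_{pm} = m Δ_{p-2} + D_m`, and for `0 < k < p`,
`D_{pm+k} = m Δ_{p-2} + (p-k)(k-1) + Δ_{k-2} + D_m + max{p-k-1, D_{m+1} - D_m}`. -/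
theorem statement_9 (p : ℕ) (hp : 3 ≤ p) (m : ℕ) :
    D p (p * m) = m * tri (p - 2) + D p m ∧
    (∀ k : ℕ, 0 < k → k < p →
      D p (p * m + k) =
        m * tri (p - 2) + (p - k) * (k - 1) + tri (k - 2) + D p m +
          max (p - k - 1) (D p (m + 1) - D p m)) := by
  constructor
  · rw [D_eq_M hp, D_eq_M hp, M_pmul hp]
  · intro k hk0 hkp
    rw [D_eq_M hp, D_eq_M hp, D_eq_M hp, M_pmulk hp m k hk0 hkp]

end Chacon
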